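/- Let G = A * B be a free product of nontrivial groups where A contains an element of order at least 3. Then the palindromic width of G is infinite: for every k there exists g ∈ G that is not a product of k palindromes. -/

import Mathlib

open Monoid Monoid.CoprodI

attribute [local instance] Classical.propDecidable

/-- The list of syllables of the reduced word representing `g`. -/
noncomputable def syllables {ι : Type*} {M : ι → Type*} [∀ i, Group (M i)]
    (g : CoprodI M) : List (Σ i, M i) :=
  letI := Classical.decEq ι
  letI : ∀ i, DecidableEq (M i) := fun _ => Classical.decEq _
  (Word.equiv g).toList

/-- `g` is a palindrome iff its reduced word reads the same backwards. -/
noncomputable def IsPalindrome {ι : Type*} {M : ι → Type*} [∀ i, Group (M i)]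
    (g : CoprodI M) : Prop :=
  (syllables g).reverse = syllables g

section Aux

set_option linter.unusedSectionVars false

variable {M : Bool → Type*} [∀ b, Group (M b)]

/-- letter inverse -/
def linv (l : Σ b, M b) : Σ b, M b := ⟨l.1, l.2⁻¹⟩

/-- inverse of a reduced word, letterwise -/
def invRev (L : List (Σ b, M b)) : List (Σ b, M b) := (L.map linv).reverse

@[simp] lemma linv_linv (l : Σ b, M b) : linv (linv l) = l := by
  cases l; simp [linv]; exact inv_inv _

/-- indicator of the pattern `x₁ ? x₂ ? x₃ ? x₄ ? x₅` at the start of `l` -/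
noncomputable def pat (x₁ x₂ x₃ x₄ x₅ : M true) (l : List (Σ b, M b)) : ℤ :=
  if l[0]? = some ⟨true, x₁⟩ ∧ l[2]? = some ⟨true, x₂⟩ ∧ l[4]? = some ⟨true, x₃⟩
      ∧ l[6]? = some ⟨true, x₄⟩ ∧ l[8]? = some ⟨true, x₅⟩ then 1 else 0

variable (a : M true)

/-- local counting function: one orbit of patterns under reversal and inversion -/
noncomputable def psi (l : List (Σ b, M b)) : ℤ :=
  pat a a a a⁻¹ a l - pat a a⁻¹ a a a l - pat a⁻¹ a a⁻¹ a⁻¹ a⁻¹ l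
    + pat a⁻¹ a⁻¹ a⁻¹ a a⁻¹ l

lemma abs_pat_le (x₁ x₂ x₃ x₄ x₅ : M true) (l : List (Σ b, M b)) :
    |pat x₁ x₂ x₃ x₄ x₅ l| ≤ 1 := by
  unfold pat; split <;> norm_num

lemma abs_psi_le (l : List (Σ b, M b)) : |psi a l| ≤ 4 := by
  unfold psi pat
  split <;> split <;> split <;> split <;> norm_num

lemma pat_congr (x₁ x₂ x₃ x₄ x₅ : M true) {l l' : List (Σ b, M b)}
    (h : ∀ e < 9, l[e]? = l'[e]?) : pat x₁ x₂ x₃ x₄ x₅ l = pat x₁ x₂ x₃ x₄ x₅ l' := by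
  unfold pat
  rw [h 0 (by norm_num), h 2 (by norm_num), h 4 (by norm_num), h 6 (by norm_num),
    h 8 (by norm_num)]

lemma psi_congr {l l' : List (Σ b, M b)} (h : ∀ e < 9, l[e]? = l'[e]?) :
    psi a l = psi a l' := by
  unfold psi; rw [pat_congr _ _ _ _ _ h, pat_congr _ _ _ _ _ h, pat_congr _ _ _ _ _ h,
    pat_congr _ _ _ _ _ h]

lemma psi_short {l : List (Σ b, M b)} (h : l.length < 9) : psi a l = 0 := by
  have h8 : l[8]? = none := by
    rw [List.getElem?_eq_none_iff]; omega
  unfold psi pat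
  rw [h8]; simp

lemma psi_append {l l' : List (Σ b, M b)} (h : 9 ≤ l.length) :
    psi a (l ++ l') = psi a l := by
  apply psi_congr
  intro e he
  rw [List.getElem?_append, if_pos (by omega)]


lemma map_linv_eq_some (o : Option (Σ b, M b)) (y : Σ b, M b) :
    o.map linv = some y ↔ o = some (linv y) := by
  cases o with
  | none => simp
  | some v =>
    simp only [Option.map_some, Option.some.injEq]
    constructor
    · rintro rfl; rw [linv_linv]
    · rintro rfl; rw [linv_linv]

lemma pat_linv (x₁ x₂ x₃ x₄ x₅ : M true) (l : List (Σ b, M b)) :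
    pat x₁ x₂ x₃ x₄ x₅ (l.map linv) = pat x₁⁻¹ x₂⁻¹ x₃⁻¹ x₄⁻¹ x₅⁻¹ l := by
  unfold pat
  simp only [List.getElem?_map, map_linv_eq_some]
  rfl

lemma pat_rev (x₁ x₂ x₃ x₄ x₅ : M true) {l : List (Σ b, M b)} (h : 9 ≤ l.length) :
    pat x₁ x₂ x₃ x₄ x₅ l.reverse = pat x₅ x₄ x₃ x₂ x₁ (l.drop (l.length - 9)) := by
  have g : ∀ e e', e < 9 → e' = l.length - 1 - e → l.reverse[e]? = (l.drop (l.length - 9))[8 - e]? := by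
    intro e e' he _
    rw [List.getElem?_reverse (by omega), List.getElem?_drop]
    congr 1
    omega
  unfold pat
  rw [g 0 _ (by norm_num) rfl, g 2 _ (by norm_num) rfl, g 4 _ (by norm_num) rfl,
    g 6 _ (by norm_num) rfl, g 8 _ (by norm_num) rfl]
  simp only [List.getElem?_drop]
  exact if_congr (by tauto) rfl rfl

lemma psi_linv (l : List (Σ b, M b)) : psi a (l.map linv) = psi a l := by
  unfold psi
  rw [pat_linv, pat_linv, pat_linv, pat_linv]
  simp only [inv_inv]
  ring

lemma psi_rev {l : List (Σ b, M b)} (h : 9 ≤ l.length) :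
    psi a l.reverse = - psi a (l.drop (l.length - 9)) := by
  unfold psi
  rw [pat_rev _ _ _ _ _ h, pat_rev _ _ _ _ _ h, pat_rev _ _ _ _ _ h, pat_rev _ _ _ _ _ h]
  ring

noncomputable def fcount (L : List (Σ b, M b)) : ℤ :=
  ∑ i ∈ Finset.range L.length, psi a (L.drop i)

lemma abs_fcount_le (L : List (Σ b, M b)) : |fcount a L| ≤ 4 * L.length := by
  unfold fcount
  apply (Finset.abs_sum_le_sum_abs _ _).trans
  calc ∑ i ∈ Finset.range L.length, |psi a (L.drop i)|
      ≤ ∑ _i ∈ Finset.range L.length, (4:ℤ) := Finset.sum_le_sum fun i _ => abs_psi_le a _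
    _ = 4 * L.length := by simp [mul_comm]

lemma fcount_short {L : List (Σ b, M b)} (h : L.length ≤ 8) : fcount a L = 0 := by
  unfold fcount
  apply Finset.sum_eq_zero
  intro i _
  exact psi_short a (by simp; omega)

lemma sum_shift (u : ℕ → ℤ) (n : ℕ) :
    ∑ j ∈ Finset.range n, (if 8 ≤ j then u (j - 8) else 0) = ∑ j ∈ Finset.range (n - 8), u j := by
  induction n with
  | zero => simp
  | succ n ih =>
    rw [Finset.sum_range_succ, ih]
    by_cases h : 8 ≤ n
    · rw [if_pos h, show n + 1 - 8 = (n - 8) + 1 by omega, Finset.sum_range_succ]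
    · rw [if_neg h, show n + 1 - 8 = 0 by omega, show n - 8 = 0 by omega, add_zero]

lemma fcount_reverse (L : List (Σ b, M b)) : fcount a L.reverse = - fcount a L := by
  set n := L.length with hn
  have hrev : ∀ i, i ≤ n → L.reverse.drop i = (L.take (n - i)).reverse := by
    intro i hi
    rw [List.reverse_take, show L.length - (n - i) = i by omega]
  have key : ∀ i ∈ Finset.range n, psi a (L.reverse.drop i)
      = if 9 ≤ n - i then - psi a (L.drop (n - i - 9)) else 0 := by
    intro i hi
    rw [Finset.mem_range] at hi
    rw [hrev i hi.le]
    by_cases h9 : 9 ≤ n - i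
    · rw [if_pos h9, psi_rev a (by rw [List.length_take]; omega)]
      congr 1
      apply psi_congr
      intro e he
      rw [List.length_take, List.getElem?_drop, List.getElem?_drop, List.getElem?_take,
        if_pos (by omega)]
      congr 1
      omega
    · rw [if_neg h9, psi_short a (by rw [List.length_reverse, List.length_take]; omega)]
  have h1 : fcount a L.reverse
      = ∑ i ∈ Finset.range n, (if 9 ≤ n - i then - psi a (L.drop (n - i - 9)) else 0) := by
    unfold fcount
    rw [List.length_reverse, ← hn]
    exact Finset.sum_congr rfl key
  rw [h1, ← Finset.sum_range_reflect]
  have h2 : ∀ j ∈ Finset.range n,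
      (if 9 ≤ n - (n - 1 - j) then - psi a (L.drop (n - (n - 1 - j) - 9)) else 0)
      = (if 8 ≤ j then - psi a (L.drop (j - 8)) else 0) := by
    intro j hj
    rw [Finset.mem_range] at hj
    by_cases h8 : 8 ≤ j
    · rw [if_pos (by omega), if_pos h8, show n - (n - 1 - j) - 9 = j - 8 by omega]
    · rw [if_neg (by omega), if_neg h8]
  rw [Finset.sum_congr rfl h2]
  have hs := sum_shift (fun j => - psi a (L.drop j)) n
  rw [hs, Finset.sum_neg_distrib]
  congr 1
  symm
  have h3 : fcount a L = ∑ j ∈ Finset.range (n - 8), psi a (L.drop j) := by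
    unfold fcount
    rw [← hn]
    symm
    apply Finset.sum_subset
    · apply Finset.range_subset_range.2; omega
    · intro i _ hi2
      rw [Finset.mem_range] at hi2
      exact psi_short a (by rw [List.length_drop]; omega)
  exact h3

lemma fcount_map_linv (L : List (Σ b, M b)) : fcount a (L.map linv) = fcount a L := by
  unfold fcount
  rw [List.length_map]
  apply Finset.sum_congr rfl
  intro i _
  rw [← List.map_drop, psi_linv]

lemma fcount_invRev (L : List (Σ b, M b)) : fcount a (invRev L) = - fcount a L := by
  unfold invRev
  rw [fcount_reverse, fcount_map_linv]

lemma fcount_append (L₁ L₂ : List (Σ b, M b)) :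
    |fcount a (L₁ ++ L₂) - fcount a L₁ - fcount a L₂| ≤ 64 := by
  set n₁ := L₁.length with hn₁
  have hsplit : fcount a (L₁ ++ L₂)
      = ∑ i ∈ Finset.range n₁, psi a ((L₁ ++ L₂).drop i) + fcount a L₂ := by
    unfold fcount
    rw [List.length_append, ← hn₁, Finset.sum_range_add]
    congr 1
    apply Finset.sum_congr rfl
    intro i _
    rw [List.drop_length_add_append]
  have hdrop : ∀ i ∈ Finset.range n₁, (L₁ ++ L₂).drop i = L₁.drop i ++ L₂ := by
    intro i hi
    rw [Finset.mem_range] at hi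
    rw [List.drop_append, show i - n₁ = 0 by omega, List.drop_zero]
  have hdrop' : ∀ i ∈ Finset.range n₁,
      psi a ((L₁ ++ L₂).drop i) = psi a (L₁.drop i ++ L₂) := by
    intro i hi
    rw [hdrop i hi]
  have hd : fcount a (L₁ ++ L₂) - fcount a L₁ - fcount a L₂
      = ∑ i ∈ Finset.range n₁, (psi a (L₁.drop i ++ L₂) - psi a (L₁.drop i)) := by
    rw [hsplit, Finset.sum_sub_distrib, Finset.sum_congr rfl hdrop']
    unfold fcount
    rw [← hn₁]
    ring
  rw [hd]
  apply (Finset.abs_sum_le_sum_abs _ _).trans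
  have hzero : ∀ i ∈ Finset.range n₁, i ∉ Finset.Ico (n₁ - 8) n₁ →
      |psi a (L₁.drop i ++ L₂) - psi a (L₁.drop i)| = 0 := by
    intro i hi hi2
    rw [Finset.mem_range] at hi
    rw [Finset.mem_Ico] at hi2
    rw [psi_append a (by rw [List.length_drop]; omega)]
    simp
  have hsub : Finset.Ico (n₁ - 8) n₁ ⊆ Finset.range n₁ := by
    intro x hx
    rw [Finset.mem_Ico] at hx
    rw [Finset.mem_range]
    omega
  rw [← Finset.sum_subset hsub hzero]
  apply (Finset.sum_le_card_nsmul _ _ 8 ?_).trans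
  · rw [Nat.card_Ico, nsmul_eq_mul]
    have h8 : n₁ - (n₁ - 8) ≤ 8 := by omega
    have h8' : ((n₁ - (n₁ - 8) : ℕ) : ℤ) ≤ 8 := by exact_mod_cast h8
    nlinarith
  · intro i _
    apply (abs_sub _ _).trans
    have := abs_psi_le a (L₁.drop i ++ L₂)
    have := abs_psi_le a (L₁.drop i)
    omega

noncomputable def eprod (L : List (Σ b, M b)) : CoprodI M :=
  (L.map fun l => CoprodI.of l.2).prod

def ValidL (L : List (Σ b, M b)) : Prop :=
  (∀ l ∈ L, l.2 ≠ 1) ∧ L.Chain' (fun x y => x.1 ≠ y.1)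

@[simp] lemma eprod_nil : eprod ([] : List (Σ b, M b)) = 1 := rfl

lemma eprod_append (L₁ L₂ : List (Σ b, M b)) :
    eprod (L₁ ++ L₂) = eprod L₁ * eprod L₂ := by
  unfold eprod
  rw [List.map_append, List.prod_append]

lemma eprod_cons (x : Σ b, M b) (L : List (Σ b, M b)) :
    eprod (x :: L) = CoprodI.of x.2 * eprod L := by
  unfold eprod
  rw [List.map_cons, List.prod_cons]

@[simp] lemma eprod_singleton (x : Σ b, M b) : eprod [x] = CoprodI.of x.2 := by
  rw [eprod_cons, eprod_nil, mul_one]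

@[simp] lemma invRev_nil : invRev ([] : List (Σ b, M b)) = [] := rfl

lemma invRev_concat (L : List (Σ b, M b)) (x : Σ b, M b) :
    invRev (L ++ [x]) = linv x :: invRev L := by
  unfold invRev
  rw [List.map_append, List.reverse_append]
  rfl

lemma eprod_invRev (L : List (Σ b, M b)) : eprod (invRev L) = (eprod L)⁻¹ := by
  induction L with
  | nil => simp
  | cons x L ih =>
    have : invRev (x :: L) = invRev L ++ [linv x] := by
      unfold invRev
      rw [List.map_cons, List.reverse_cons]
    rw [this, eprod_append, ih, eprod_singleton, eprod_cons, mul_inv_rev]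
    show (eprod L)⁻¹ * CoprodI.of (x.2⁻¹) = _
    rw [map_inv]

/-- the reduced word of a product of a valid list of letters is that list -/
lemma syllables_eprod {L : List (Σ b, M b)} (h : ValidL L) : syllables (eprod L) = L := by
  letI := Classical.decEq Bool
  letI : ∀ b, DecidableEq (M b) := fun _ => Classical.decEq _
  let w : Word M := ⟨L, h.1, h.2⟩
  have h1 : eprod L = Word.prod w := rfl
  have h2 : Word.prod w = Word.equiv.symm w := rfl
  show (Word.equiv (eprod L)).toList = L
  rw [h1, h2, Equiv.apply_symm_apply]

lemma valid_syllables (g : CoprodI M) : ValidL (syllables g) := by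
  letI := Classical.decEq Bool
  letI : ∀ b, DecidableEq (M b) := fun _ => Classical.decEq _
  exact ⟨(Word.equiv g).ne_one, (Word.equiv g).chain_ne⟩

lemma eprod_syllables (g : CoprodI M) : eprod (syllables g) = g := by
  letI := Classical.decEq Bool
  letI : ∀ b, DecidableEq (M b) := fun _ => Classical.decEq _
  show Word.prod (Word.equiv g) = g
  have h2 : Word.prod (Word.equiv g) = Word.equiv.symm (Word.equiv g) := rfl
  rw [h2, Equiv.symm_apply_apply]

@[simp] lemma syllables_one : syllables (1 : CoprodI M) = [] :=
  syllables_eprod ⟨by simp, List.isChain_nil⟩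


theorem syllables_mul_aux : ∀ (n : ℕ) (X Y : List (Σ b, M b)), X.length ≤ n →
    ValidL X → ValidL Y →
    ∃ P S T P₀ T₀ Md : List (Σ b, M b),
      X = P ++ S ∧ Y = invRev S ++ T ∧
      (P₀ = P ∨ P₀ = P.dropLast) ∧ (T₀ = T ∨ T₀ = T.tail) ∧ Md.length ≤ 1 ∧
      syllables (eprod X * eprod Y) = P₀ ++ Md ++ T₀ := by
  intro n
  induction n with
  | zero =>
    intro X Y hlen hX hY
    have hXnil : X = [] := List.eq_nil_of_length_eq_zero (Nat.le_zero.1 hlen)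
    subst hXnil
    refine ⟨[], [], Y, [], Y, [], by simp, by rw [invRev_nil]; simp, Or.inl rfl,
      Or.inl rfl, by simp, ?_⟩
    rw [eprod_nil, one_mul, syllables_eprod hY]
    simp
  | succ n ih =>
    intro X Y hlen hX hY
    rcases List.eq_nil_or_concat' X with hXnil | ⟨X₀, x, rfl⟩
    · subst hXnil
      refine ⟨[], [], Y, [], Y, [], by simp, by rw [invRev_nil]; simp, Or.inl rfl,
        Or.inl rfl, by simp, ?_⟩
      rw [eprod_nil, one_mul, syllables_eprod hY]
      simp
    · rcases Y with _ | ⟨y, Y₁⟩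
      · -- Y empty
        refine ⟨X₀ ++ [x], [], [], X₀ ++ [x], [], [], by simp, by rw [invRev_nil]; simp, Or.inl rfl,
          Or.inl rfl, by simp, ?_⟩
        rw [eprod_nil, mul_one, syllables_eprod hX]
        simp
      · obtain ⟨bx, xv⟩ := x
        obtain ⟨by', yv⟩ := y
        -- validity pieces
        have hchainX := hX.2
        rw [List.Chain', List.isChain_append] at hchainX
        have hX₀ : ValidL X₀ :=
          ⟨fun l hl => hX.1 l (by simp [hl]), hchainX.1⟩
        have hY₁ : ValidL Y₁ :=
          ⟨fun l hl => hY.1 l (by simp [hl]), List.IsChain.tail hY.2⟩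
        have hxne : xv ≠ 1 := hX.1 ⟨bx, xv⟩ (by simp)
        have hyne : yv ≠ 1 := hY.1 ⟨by', yv⟩ (by simp)
        by_cases hb : bx = by'
        · subst hb
          by_cases hxy : xv * yv = 1
          · -- full cancellation of the junction letters; recurse
            have hyv : yv = xv⁻¹ := by
              rw [← one_mul yv, ← inv_mul_cancel xv, mul_assoc, hxy, mul_one]
            obtain ⟨P, S, T, P₀, T₀, Md, h1, h2, h3, h4, h5, h6⟩ :=
              ih X₀ Y₁ (by simp at hlen ⊢; omega) hX₀ hY₁
            refine ⟨P, S ++ [⟨bx, xv⟩], T, P₀, T₀, Md, ?_, ?_, h3, h4, h5, ?_⟩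
            · rw [h1, List.append_assoc]
            · rw [invRev_concat]
              show _ = ⟨bx, xv⁻¹⟩ :: (invRev S ++ T)
              rw [← hyv, ← h2]
            · have hprod : eprod (X₀ ++ [⟨bx, xv⟩]) * eprod (⟨bx, yv⟩ :: Y₁)
                  = eprod X₀ * eprod Y₁ := by
                rw [eprod_append, eprod_singleton, eprod_cons]
                calc eprod X₀ * CoprodI.of xv * (CoprodI.of yv * eprod Y₁)
                    = eprod X₀ * (CoprodI.of xv * CoprodI.of yv) * eprod Y₁ := by
                      group
                  _ = eprod X₀ * eprod Y₁ := by
                      rw [← map_mul, hxy, map_one, mul_one]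
              rw [hprod, h6]
          · -- amalgamation
            have hJ : ValidL (X₀ ++ ⟨bx, xv * yv⟩ :: Y₁) := by
              refine ⟨?_, ?_⟩
              · intro l hl
                rcases List.mem_append.1 hl with h | h
                · exact hX₀.1 l h
                · rcases List.mem_cons.1 h with h | h
                  · rw [h]; exact hxy
                  · exact hY₁.1 l h
              · rw [List.Chain', List.isChain_append]
                refine ⟨hX₀.2, ?_, ?_⟩
                · rw [List.isChain_cons]
                  refine ⟨?_, hY₁.2⟩
                  intro z hz
                  have hYc := hY.2
                  rw [List.Chain', List.isChain_cons] at hYc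
                  exact hYc.1 z hz
                · intro p hp q hq
                  have := hchainX.2.2 p hp ⟨bx, xv⟩ (by simp)
                  simp only [List.head?_cons, Option.mem_def, Option.some.injEq] at hq
                  rw [← hq]
                  exact this
            refine ⟨X₀ ++ [⟨bx, xv⟩], [], ⟨bx, yv⟩ :: Y₁, X₀, Y₁, [⟨bx, xv * yv⟩],
              by simp, by rw [invRev_nil]; simp, Or.inr (by rw [List.dropLast_concat]),
              Or.inr rfl, by simp, ?_⟩
            have hprod : eprod (X₀ ++ [⟨bx, xv⟩]) * eprod (⟨bx, yv⟩ :: Y₁)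
                = eprod (X₀ ++ ⟨bx, xv * yv⟩ :: Y₁) := by
              rw [eprod_append, eprod_singleton, eprod_append, eprod_cons]
              have hmm : (CoprodI.of (M := M) (xv * yv)) = CoprodI.of xv * CoprodI.of yv :=
                map_mul _ _ _
              rw [eprod_cons, hmm]
              group
            rw [hprod, syllables_eprod hJ]; simp
        · -- different summands: plain concatenation
          have hJ : ValidL ((X₀ ++ [⟨bx, xv⟩]) ++ ⟨by', yv⟩ :: Y₁) := by
            refine ⟨?_, ?_⟩
            · intro l hl
              rcases List.mem_append.1 hl with h | h
              · exact hX.1 l h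
              · exact hY.1 l h
            · rw [List.Chain', List.isChain_append]
              refine ⟨hX.2, hY.2, ?_⟩
              intro p hp q hq
              rw [List.getLast?_concat] at hp
              simp only [Option.mem_def, Option.some.injEq] at hp hq
              rw [List.head?_cons, Option.some.injEq] at hq
              rw [← hp, ← hq]
              exact hb
          refine ⟨X₀ ++ [⟨bx, xv⟩], [], ⟨by', yv⟩ :: Y₁, X₀ ++ [⟨bx, xv⟩], ⟨by', yv⟩ :: Y₁, [],
            by simp, by rw [invRev_nil]; simp, Or.inl rfl, Or.inl rfl, by simp, ?_⟩
          rw [← eprod_append, syllables_eprod hJ]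
          simp

noncomputable def Fq (g : CoprodI M) : ℤ := fcount a (syllables g)

lemma fcount_dropLast (P : List (Σ b, M b)) :
    |fcount a P.dropLast - fcount a P| ≤ 64 := by
  rcases List.eq_nil_or_concat' P with rfl | ⟨P₀, x, rfl⟩
  · simp
  · rw [List.dropLast_concat]
    have h := fcount_append a P₀ [x]
    have h1 : fcount a [x] = 0 := fcount_short a (by simp)
    rw [h1] at h
    rw [abs_sub_comm]
    simpa using h
lemma fcount_tail (T : List (Σ b, M b)) :
    |fcount a T.tail - fcount a T| ≤ 64 := by
  rcases T with _ | ⟨t, T'⟩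
  · simp
  · have h := fcount_append a [t] T'
    have h1 : fcount a [t] = 0 := fcount_short a (by simp)
    rw [h1] at h
    rw [List.tail_cons, abs_sub_comm]
    have : ([t] : List (Σ b, M b)) ++ T' = t :: T' := rfl
    rw [this] at h
    simpa using h

lemma Fq_mul (g h : CoprodI M) : |Fq a (g * h) - Fq a g - Fq a h| ≤ 500 := by
  obtain ⟨P, S, T, P₀, T₀, Md, h1, h2, h3, h4, h5, h6⟩ :=
    syllables_mul_aux (syllables g).length (syllables g) (syllables h) le_rfl
      (valid_syllables g) (valid_syllables h)
  rw [eprod_syllables, eprod_syllables] at h6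
  have e1 : Fq a g = fcount a (P ++ S) := by unfold Fq; rw [h1]
  have e2 : Fq a h = fcount a (invRev S ++ T) := by unfold Fq; rw [h2]
  have e3 : Fq a (g * h) = fcount a (P₀ ++ Md ++ T₀) := by unfold Fq; rw [h6]
  have b1 := fcount_append a P S
  have b2 := fcount_append a (invRev S) T
  have b3 := fcount_append a (P₀ ++ Md) T₀
  have b4 := fcount_append a P₀ Md
  have bMd : fcount a Md = 0 := fcount_short a (by omega)
  have bS := fcount_invRev a S
  have bP : |fcount a P₀ - fcount a P| ≤ 64 := by
    rcases h3 with rfl | rfl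
    · simp
    · exact fcount_dropLast a P
  have bT : |fcount a T₀ - fcount a T| ≤ 64 := by
    rcases h4 with rfl | rfl
    · simp
    · exact fcount_tail a T
  rw [e1, e2, e3, abs_le]
  rw [abs_le] at b1 b2 b3 b4 bP bT
  constructor <;> linarith [b1.1, b1.2, b2.1, b2.2, b3.1, b3.2, b4.1, b4.2, bP.1, bP.2,
    bT.1, bT.2, bS, bMd]

lemma Fq_one : Fq (M := M) a 1 = 0 := by
  unfold Fq
  have : syllables (1 : CoprodI M) = [] := syllables_eprod (L := []) ⟨by simp, List.isChain_nil⟩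
  rw [this]
  exact fcount_short a (by simp)

lemma Fq_palindrome {p : CoprodI M} (hp : IsPalindrome p) : Fq a p = 0 := by
  unfold Fq
  have h := fcount_reverse a (syllables p)
  rw [hp] at h
  omega

lemma Fq_prod_palindromes : ∀ L : List (CoprodI M), (∀ p ∈ L, IsPalindrome p) →
    |Fq a L.prod| ≤ 500 * L.length := by
  intro L
  induction L with
  | nil =>
    intro _
    simp [Fq_one]
  | cons p L ih =>
    intro hpal
    have hp : Fq a p = 0 := Fq_palindrome a (hpal p (by simp))
    have hL := ih fun q hq => hpal q (by simp [hq])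
    have hq := Fq_mul a p L.prod
    rw [List.prod_cons]
    rw [hp] at hq
    rw [abs_le] at *
    rw [List.length_cons]
    push_cast
    constructor <;> linarith [hq.1, hq.2, hL.1, hL.2]

variable (b : M false)

/-- the periodic word whose powers have unbounded `fcount` -/
def pw : List (Σ b, M b) :=
  [⟨true, a⟩, ⟨false, b⟩, ⟨true, a⟩, ⟨false, b⟩, ⟨true, a⟩, ⟨false, b⟩,
   ⟨true, a⁻¹⟩, ⟨false, b⟩, ⟨true, a⟩, ⟨false, b⟩, ⟨true, a⁻¹⟩, ⟨false, b⟩,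
   ⟨true, a⁻¹⟩, ⟨false, b⟩]

lemma length_pw : (pw a b).length = 14 := rfl

/-- powers of the periodic word -/
def cpow : ℕ → List (Σ b, M b)
  | 0 => []
  | n + 1 => pw a b ++ cpow n

lemma valid_cpow (ha1 : a ≠ 1) (hb : b ≠ 1) :
    ∀ n, ValidL (cpow a b n) ∧
      (cpow a b n = [] ∨ (cpow a b n).head? = some ⟨true, a⟩) := by
  intro n
  induction n with
  | zero => exact ⟨⟨by simp [cpow], List.isChain_nil⟩, Or.inl rfl⟩
  | succ n ih =>
    have ha1' : a⁻¹ ≠ 1 := inv_ne_one.2 ha1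
    refine ⟨⟨?_, ?_⟩, Or.inr rfl⟩
    · intro l hl
      have hl' : l ∈ pw a b ++ cpow a b n := hl
      rcases List.mem_append.1 hl' with h | h
      · simp only [pw, List.mem_cons, List.not_mem_nil, or_false] at h
        rcases h with rfl|rfl|rfl|rfl|rfl|rfl|rfl|rfl|rfl|rfl|rfl|rfl|rfl|rfl <;>
          first | exact ha1 | exact ha1' | exact hb
      · exact ih.1.1 l h
    · show List.Chain' _ (pw a b ++ cpow a b n)
      rw [List.Chain', List.isChain_append]
      refine ⟨?_, ih.1.2, ?_⟩
      · simp [pw]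
      · intro x hx y hy
        rw [show (pw a b).getLast? = some ⟨false, b⟩ from rfl] at hx
        simp only [Option.mem_def, Option.some.injEq] at hx hy
        rcases ih.2 with hnil | hhd
        · rw [hnil] at hy; simp at hy
        · rw [hhd] at hy
          rw [Option.some.injEq] at hy
          rw [← hx, ← hy]
          simp

lemma take_14_cpow_succ (n : ℕ) : (cpow a b (n+1)).take 14 = pw a b := by
  show (pw a b ++ cpow a b n).take 14 = pw a b
  rw [← length_pw a b, List.take_left]

lemma fcount_pw_step {w : List (Σ b, M b)} (ha2 : a ≠ a⁻¹)
    (hw : w.take 14 = pw a b) : fcount a (pw a b ++ w) = fcount a w + 1 := by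
  have ha2' : a⁻¹ ≠ a := fun h => ha2 h.symm
  have hw' : w = pw a b ++ w.drop 14 := by
    have h := List.take_append_drop 14 w
    rw [hw] at h
    exact h.symm
  have hlen : (pw a b ++ w).length = 14 + w.length := by
    rw [List.length_append, length_pw]
  unfold fcount
  rw [hlen, Finset.sum_range_add]
  have hsecond : ∀ i ∈ Finset.range w.length,
      psi a ((pw a b ++ w).drop (14 + i)) = psi a (w.drop i) := by
    intro i _
    rw [show (14 : ℕ) + i = (pw a b).length + i by rw [length_pw], List.drop_length_add_append]
  have hfirst : ∀ i ∈ Finset.range 14,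
      psi a ((pw a b ++ w).drop i) = psi a ((pw a b).drop i ++ pw a b) := by
    intro i hi
    rw [Finset.mem_range] at hi
    rw [List.drop_append, show i - (pw a b).length = 0 by
      rw [length_pw]; omega, List.drop_zero]
    conv_lhs => rw [hw']
    rw [← List.append_assoc]
    rw [psi_append a (by rw [List.length_append, List.length_drop, length_pw]; omega)]
  rw [Finset.sum_congr rfl hsecond, Finset.sum_congr rfl hfirst]
  have hkey : ∑ i ∈ Finset.range 14, psi a ((pw a b).drop i ++ pw a b) = 1 := by
    simp only [Finset.sum_range_succ, Finset.sum_range_zero, pw, psi, pat]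
    norm_num [ha2, ha2', List.getElem?_cons_zero, List.getElem?_cons_succ]
  rw [hkey]
  ring

lemma fcount_cpow (ha2 : a ≠ a⁻¹) :
    ∀ n : ℕ, fcount a (cpow a b (n+1)) = fcount a (pw a b) + n := by
  intro n
  induction n with
  | zero =>
    show fcount a (pw a b ++ cpow a b 0) = _
    show fcount a (pw a b ++ []) = _
    rw [List.append_nil]
    simp
  | succ n ih =>
    show fcount a (pw a b ++ cpow a b (n+1)) = _
    rw [fcount_pw_step a b ha2 (take_14_cpow_succ a b n), ih]
    push_cast
    ring

theorem main_aux {M : Bool → Type*} [∀ b, Group (M b)]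
    [Nontrivial (M false)]
    (a : M true) (ha1 : a ≠ 1) (ha2 : a ≠ a⁻¹) :
    ∀ k : ℕ, ∃ g : CoprodI M, ¬ ∃ L : List (CoprodI M),
      L.length ≤ k ∧ (∀ p ∈ L, IsPalindrome p) ∧ L.prod = g := by
  intro k
  obtain ⟨b, hb⟩ := exists_ne (1 : M false)
  set N : ℕ := 500 * k + 100 with hN
  refine ⟨eprod (cpow a b (N+1)), ?_⟩
  rintro ⟨L, hlen, hpal, hprodL⟩
  have hval : Fq a (eprod (cpow a b (N+1))) = fcount a (pw a b) + N := by
    unfold Fq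
    rw [syllables_eprod ((valid_cpow a b ha1 hb (N+1)).1), fcount_cpow a b ha2 N]
  have hub := Fq_prod_palindromes a L hpal
  rw [hprodL, hval] at hub
  have hpw := abs_fcount_le a (pw a b)
  rw [length_pw] at hpw
  rw [abs_le] at hub hpw
  have hlen' : (L.length : ℤ) ≤ (k : ℤ) := by exact_mod_cast hlen
  have hNZ : (N : ℤ) = 500 * (k : ℤ) + 100 := by rw [hN]; push_cast; ring
  have h14 : ((14 : ℕ) : ℤ) = 14 := by norm_num
  rw [h14] at hpw
  linarith [hub.1, hub.2, hpw.1, hpw.2]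

end Aux


/-- If `A` contains an element of order at least 3, the palindromic width of
the free product `A * B` is infinite. -/
theorem palindromic_width_infinite_of_order_ge_three {M : Bool → Type*} [∀ b, Group (M b)]
    [Nontrivial (M true)] [Nontrivial (M false)]
    (a : M true) (ha1 : a ≠ 1) (ha2 : a ≠ a⁻¹) :
    ∀ k : ℕ, ∃ g : CoprodI M, ¬ ∃ L : List (CoprodI M),
      L.length ≤ k ∧ (∀ p ∈ L, IsPalindrome p) ∧ L.prod = g := by
  exact main_aux a ha1 ha2
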